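/- With the same setup (e positive with e g = 1, β̄ 0 = e 0, β̄ (j+1) = e j (β' (j+1) − 1) + n j β̄ j, w j = e j / e 0, β' 1 = β̄ 1 / β̄ 0) and for any real δ ≥ 1: 2 * β̄ 0 * β̄ 1 − δ * β̄ 0 ^ 2 ≥ β̄ (g+1) if and only if β' 1 − δ ≥ ∑_{j=1}^{g} (w j)^2 * (β' (j+1) − 1). -/

import Mathlib

/-- Equivalence underlying Theorem 4.5(c). -/
theorem npi_nonspecial_criterion
    (g : ℕ) (hg : 1 ≤ g) (e bp bb n w : ℕ → ℝ) (δ : ℝ) (hδ : 1 ≤ δ)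
    (he : ∀ j ≤ g, 0 < e j) (heg : e g = 1)
    (hn0 : n 0 = 1) (hn : ∀ j, 1 ≤ j → j ≤ g → n j = e (j - 1) / e j)
    (hw : ∀ j ≤ g, w j = e j / e 0)
    (hb0 : bb 0 = e 0)
    (hrec : ∀ j ≤ g, bb (j + 1) = e j * (bp (j + 1) - 1) + n j * bb j)
    (hbp1 : bp 1 = bb 1 / bb 0) :
    2 * bb 0 * bb 1 - δ * bb 0 ^ 2 ≥ bb (g + 1) ↔
      bp 1 - δ ≥ ∑ j ∈ Finset.Icc 1 g, (w j) ^ 2 * (bp (j + 1) - 1) := by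
  have he0 : (0:ℝ) < e 0 := he 0 (by omega)
  have key : ∀ m, m ≤ g →
      e m * bb (m + 1) =
        (∑ j ∈ Finset.Icc 1 m, (e j) ^ 2 * (bp (j + 1) - 1)) + e 0 * bb 1 := by
    intro m
    induction m with
    | zero => intro _; simp
    | succ m ih =>
      intro hm
      have hm' : m ≤ g := by omega
      have hem1 : (0:ℝ) < e (m + 1) := he (m + 1) hm
      have hrec' := hrec (m + 1) hm
      have hn' := hn (m + 1) (by omega) hm
      simp only [Nat.add_sub_cancel] at hn'
      rw [Finset.sum_Icc_succ_top (by omega : 1 ≤ m + 1), hrec', hn']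
      have : e (m + 1) * (e m / e (m + 1) * bb (m + 1)) = e m * bb (m + 1) := by
        field_simp
      rw [mul_add, this, ih hm']
      ring
  have hsum := key g le_rfl
  rw [heg, one_mul] at hsum
  set S := ∑ j ∈ Finset.Icc 1 g, (e j) ^ 2 * (bp (j + 1) - 1) with hS
  have hwsum : ∑ j ∈ Finset.Icc 1 g, (w j) ^ 2 * (bp (j + 1) - 1) = S / e 0 ^ 2 := by
    rw [hS, Finset.sum_div]
    apply Finset.sum_congr rfl
    intro j hj
    have hjg : j ≤ g := (Finset.mem_Icc.mp hj).2
    rw [hw j hjg, div_pow]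
    ring
  rw [hsum, hwsum, hbp1, hb0, ge_iff_le, ge_iff_le,
    div_le_iff₀ (by positivity : (0:ℝ) < e 0 ^ 2)]
  have hc : bb 1 / e 0 * e 0 = bb 1 := by field_simp
  constructor
  · intro h; nlinarith [hc]
  · intro h; nlinarith [hc]
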